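/- Let F = diag(f₁,f₂,f₃) with f_i ≥ 0, P ∈ SO(3), Φ = (1/2) tr(F(I − P)), and e_P = (1/2)(FP − PᵀF)^∨. Then with h₁ = min{f₁+f₂, f₂+f₃, f₃+f₁}, h₂ = max{(f₁−f₂)², (f₂−f₃)², (f₃−f₁)²}, h₃ = max{(f₁+f₂)², (f₂+f₃)², (f₃+f₁)²}, the lower bound (h₁/(h₂+h₃)) ‖e_P‖² ≤ Φ holds. -/

import Mathlib

open Matrix

/-- The vee map, inverse of the hat map on skew-symmetric matrices. -/
def vee (S : Matrix (Fin 3) (Fin 3) ℝ) : Fin 3 → ℝ :=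
  ![S 2 1, S 0 2, S 1 0]

/-- Euclidean norm on `ℝ³`. -/
noncomputable def enorm (v : Fin 3 → ℝ) : ℝ := Real.sqrt (v ⬝ᵥ v)

private theorem cauchy3 (a b c d e f : ℝ) :
    (a*d+b*e+c*f)^2 ≤ (a^2+b^2+c^2)*(d^2+e^2+f^2) := by
  nlinarith [sq_nonneg (a*e-b*d), sq_nonneg (a*f-c*d), sq_nonneg (b*f-c*e)]

private theorem KA (p00 p10 p11 p12 p20 p21 p22 : ℝ)
    (r11 : p10*p10 + p11*p11 + p12*p12 = 1)
    (r22 : p20*p20 + p21*p21 + p22*p22 = 1)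
    (r12 : p10*p20 + p11*p21 + p12*p22 = 0)
    (a00 : p00 = p11*p22 - p12*p21) :
    (p21 - p12)^2 ≤ 4*(1 - p11 - p22 + p00) := by
  have cs := cauchy3 (-p10) (1-p11) (-p12) (-p20) (-p21) (1-p22)
  have hL : -p10 * -p20 + (1 - p11) * -p21 + -p12 * (1 - p22) = -(p12+p21) := by
    linear_combination r12
  have hU : (-p10)^2 + (1-p11)^2 + (-p12)^2 = 2*(1-p11) := by linear_combination r11
  have hV : (-p20)^2 + (-p21)^2 + (1-p22)^2 = 2*(1-p22) := by linear_combination r22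
  rw [hL, hU, hV] at cs
  nlinarith [cs]

private theorem KB (p00 p10 p11 p12 p20 p21 p22 : ℝ)
    (r11 : p10*p10 + p11*p11 + p12*p12 = 1)
    (r22 : p20*p20 + p21*p21 + p22*p22 = 1)
    (a00 : p00 = p11*p22 - p12*p21) :
    (p21 + p12)^2 ≤ 4*(1 - p00) := by
  nlinarith [sq_nonneg (p11 - p22), sq_nonneg (p12 - p21), sq_nonneg p10, sq_nonneg p20]

set_option maxHeartbeats 1000000 in
private theorem key_sum (f1 f2 f3 q0 q1 q2 X0 X1 X2 Y0 Y1 Y2 h1 h2 h3 : ℝ)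
    (hq0 : 0 ≤ q0) (hq1 : 0 ≤ q1) (hq2 : 0 ≤ q2)
    (hX0 : 0 ≤ X0) (hX1 : 0 ≤ X1) (hX2 : 0 ≤ X2)
    (hXq0 : X0 ≤ 8*q0) (hXq1 : X1 ≤ 8*q1) (hXq2 : X2 ≤ 8*q2)
    (hY0 : 0 ≤ Y0) (hY1 : 0 ≤ Y1) (hY2 : 0 ≤ Y2)
    (hYq0 : Y0 ≤ 4*(q1+q2)) (hYq1 : Y1 ≤ 4*(q2+q0)) (hYq2 : Y2 ≤ 4*(q0+q1))
    (h1n : 0 ≤ h1) (hG0 : h1 ≤ f2+f3) (hG1 : h1 ≤ f3+f1) (hG2 : h1 ≤ f1+f2)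
    (h2n : 0 ≤ h2) (hD0 : (f3-f2)^2 ≤ h2) (hD1 : (f1-f3)^2 ≤ h2) (hD2 : (f2-f1)^2 ≤ h2)
    (hH0 : (f2+f3)^2 ≤ h3) (hH1 : (f3+f1)^2 ≤ h3) (hH2 : (f1+f2)^2 ≤ h3)
    (hf1 : 0 ≤ f1) (hf2 : 0 ≤ f2) (hf3 : 0 ≤ f3) :
    h1 * ((f2+f3)^2*X0 + (f3+f1)^2*X1 + (f1+f2)^2*X2
        + (f3-f2)^2*Y0 + (f1-f3)^2*Y1 + (f2-f1)^2*Y2)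
      ≤ 8*(h2+h3) * ((f2+f3)*q0 + (f3+f1)*q1 + (f1+f2)*q2) := by
  have hG0n : (0:ℝ) ≤ f2+f3 := by linarith
  have hG1n : (0:ℝ) ≤ f3+f1 := by linarith
  have hG2n : (0:ℝ) ≤ f1+f2 := by linarith
  have h3n : (0:ℝ) ≤ h3 := le_trans (sq_nonneg _) hH0
  have e0 : h1*(f2+f3) ≤ h3 := le_trans (mul_le_mul_of_nonneg_right hG0 hG0n) (by nlinarith)
  have e1 : h1*(f3+f1) ≤ h3 := le_trans (mul_le_mul_of_nonneg_right hG1 hG1n) (by nlinarith)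
  have e2 : h1*(f1+f2) ≤ h3 := le_trans (mul_le_mul_of_nonneg_right hG2 hG2n) (by nlinarith)
  have t0 : h1 * ((f2+f3)^2*X0) ≤ 8*h3*((f2+f3)*q0) := by
    calc h1 * ((f2+f3)^2*X0) = (h1*(f2+f3))*((f2+f3)*X0) := by ring
      _ ≤ h3*((f2+f3)*X0) := mul_le_mul_of_nonneg_right e0 (mul_nonneg hG0n hX0)
      _ ≤ h3*((f2+f3)*(8*q0)) := by gcongr
      _ = 8*h3*((f2+f3)*q0) := by ring
  have t1 : h1 * ((f3+f1)^2*X1) ≤ 8*h3*((f3+f1)*q1) := by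
    calc h1 * ((f3+f1)^2*X1) = (h1*(f3+f1))*((f3+f1)*X1) := by ring
      _ ≤ h3*((f3+f1)*X1) := mul_le_mul_of_nonneg_right e1 (mul_nonneg hG1n hX1)
      _ ≤ h3*((f3+f1)*(8*q1)) := by gcongr
      _ = 8*h3*((f3+f1)*q1) := by ring
  have t2 : h1 * ((f1+f2)^2*X2) ≤ 8*h3*((f1+f2)*q2) := by
    calc h1 * ((f1+f2)^2*X2) = (h1*(f1+f2))*((f1+f2)*X2) := by ring
      _ ≤ h3*((f1+f2)*X2) := mul_le_mul_of_nonneg_right e2 (mul_nonneg hG2n hX2)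
      _ ≤ h3*((f1+f2)*(8*q2)) := by gcongr
      _ = 8*h3*((f1+f2)*q2) := by ring
  have u0 : h1 * ((f3-f2)^2*Y0) ≤ 4*h2*((f3+f1)*q1 + (f1+f2)*q2) := by
    calc h1 * ((f3-f2)^2*Y0) = (f3-f2)^2*(h1*Y0) := by ring
      _ ≤ h2*(h1*Y0) := mul_le_mul_of_nonneg_right hD0 (mul_nonneg h1n hY0)
      _ ≤ h2*(h1*(4*(q1+q2))) := by gcongr
      _ = 4*(h1*q1 + h1*q2)*h2 := by ring
      _ ≤ 4*((f3+f1)*q1 + (f1+f2)*q2)*h2 := by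
          apply mul_le_mul_of_nonneg_right _ h2n
          have := mul_le_mul_of_nonneg_right hG1 hq1
          have := mul_le_mul_of_nonneg_right hG2 hq2
          linarith
      _ = 4*h2*((f3+f1)*q1 + (f1+f2)*q2) := by ring
  have u1 : h1 * ((f1-f3)^2*Y1) ≤ 4*h2*((f1+f2)*q2 + (f2+f3)*q0) := by
    calc h1 * ((f1-f3)^2*Y1) = (f1-f3)^2*(h1*Y1) := by ring
      _ ≤ h2*(h1*Y1) := mul_le_mul_of_nonneg_right hD1 (mul_nonneg h1n hY1)
      _ ≤ h2*(h1*(4*(q2+q0))) := by gcongr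
      _ = 4*(h1*q2 + h1*q0)*h2 := by ring
      _ ≤ 4*((f1+f2)*q2 + (f2+f3)*q0)*h2 := by
          apply mul_le_mul_of_nonneg_right _ h2n
          have := mul_le_mul_of_nonneg_right hG2 hq2
          have := mul_le_mul_of_nonneg_right hG0 hq0
          linarith
      _ = 4*h2*((f1+f2)*q2 + (f2+f3)*q0) := by ring
  have u2 : h1 * ((f2-f1)^2*Y2) ≤ 4*h2*((f2+f3)*q0 + (f3+f1)*q1) := by
    calc h1 * ((f2-f1)^2*Y2) = (f2-f1)^2*(h1*Y2) := by ring
      _ ≤ h2*(h1*Y2) := mul_le_mul_of_nonneg_right hD2 (mul_nonneg h1n hY2)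
      _ ≤ h2*(h1*(4*(q0+q1))) := by gcongr
      _ = 4*(h1*q0 + h1*q1)*h2 := by ring
      _ ≤ 4*((f2+f3)*q0 + (f3+f1)*q1)*h2 := by
          apply mul_le_mul_of_nonneg_right _ h2n
          have := mul_le_mul_of_nonneg_right hG0 hq0
          have := mul_le_mul_of_nonneg_right hG1 hq1
          linarith
      _ = 4*h2*((f2+f3)*q0 + (f3+f1)*q1) := by ring
  nlinarith [t0, t1, t2, u0, u1, u2]

set_option maxHeartbeats 2000000 in
theorem config_error_lower_bound
    (f1 f2 f3 : ℝ) (hf1 : 0 ≤ f1) (hf2 : 0 ≤ f2) (hf3 : 0 ≤ f3)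
    (P : Matrix (Fin 3) (Fin 3) ℝ) (hP : Pᵀ * P = 1) (hdet : P.det = 1)
    (F : Matrix (Fin 3) (Fin 3) ℝ) (hF : F = Matrix.diagonal ![f1, f2, f3])
    (Φ : ℝ) (hΦ : Φ = (1/2) * (F * (1 - P)).trace)
    (eP : Fin 3 → ℝ) (heP : eP = (1/2 : ℝ) • vee (F * P - Pᵀ * F))
    (h1 h2 h3 : ℝ)
    (hh1 : h1 = min (f1 + f2) (min (f2 + f3) (f3 + f1)))
    (hh2 : h2 = max ((f1 - f2)^2) (max ((f2 - f3)^2) ((f3 - f1)^2)))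
    (hh3 : h3 = max ((f1 + f2)^2) (max ((f2 + f3)^2) ((f3 + f1)^2))) :
    (h1 / (h2 + h3)) * (_root_.enorm eP)^2 ≤ Φ := by
  -- scalar orthogonality relations
  have hPPt : P * Pᵀ = 1 := by rwa [mul_eq_one_comm] at hP
  have hc : ∀ i j : Fin 3, P 0 i * P 0 j + P 1 i * P 1 j + P 2 i * P 2 j
      = if i = j then 1 else 0 := by
    intro i j
    have := congrFun (congrFun hP i) j
    simpa [Matrix.mul_apply, Fin.sum_univ_three, Matrix.one_apply] using this
  have hr : ∀ i j : Fin 3, P i 0 * P j 0 + P i 1 * P j 1 + P i 2 * P j 2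
      = if i = j then 1 else 0 := by
    intro i j
    have := congrFun (congrFun hPPt i) j
    simpa [Matrix.mul_apply, Fin.sum_univ_three, Matrix.one_apply] using this
  have row0 : P 0 0 * P 0 0 + P 0 1 * P 0 1 + P 0 2 * P 0 2 = 1 := by simpa using hr 0 0
  have row1 : P 1 0 * P 1 0 + P 1 1 * P 1 1 + P 1 2 * P 1 2 = 1 := by simpa using hr 1 1
  have row2 : P 2 0 * P 2 0 + P 2 1 * P 2 1 + P 2 2 * P 2 2 = 1 := by simpa using hr 2 2
  have o01 : P 0 0 * P 1 0 + P 0 1 * P 1 1 + P 0 2 * P 1 2 = 0 := by simpa using hr 0 1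
  have o02 : P 0 0 * P 2 0 + P 0 1 * P 2 1 + P 0 2 * P 2 2 = 0 := by simpa using hr 0 2
  have o12 : P 1 0 * P 2 0 + P 1 1 * P 2 1 + P 1 2 * P 2 2 = 0 := by simpa using hr 1 2
  have col1 : P 0 1 * P 0 1 + P 1 1 * P 1 1 + P 2 1 * P 2 1 = 1 := by simpa using hc 1 1
  have col2 : P 0 2 * P 0 2 + P 1 2 * P 1 2 + P 2 2 * P 2 2 = 1 := by simpa using hc 2 2
  -- cofactor identities from adjugate P = Pᵀ
  have hadj : adjugate P = Pᵀ := by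
    have hmul : P * adjugate P = 1 := by rw [Matrix.mul_adjugate, hdet, one_smul]
    calc adjugate P = 1 * adjugate P := (one_mul _).symm
      _ = Pᵀ * P * adjugate P := by rw [hP]
      _ = Pᵀ * (P * adjugate P) := by rw [Matrix.mul_assoc]
      _ = Pᵀ := by rw [hmul, mul_one]
  have a00 : P 0 0 = P 1 1 * P 2 2 - P 1 2 * P 2 1 := by
    have := congrFun (congrFun (adjugate_fin_three P ▸ hadj : _ = Pᵀ) 0) 0
    simpa using this.symm
  have a11 : P 1 1 = P 0 0 * P 2 2 - P 0 2 * P 2 0 := by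
    have := congrFun (congrFun (adjugate_fin_three P ▸ hadj : _ = Pᵀ) 1) 1
    simpa using this.symm
  have a22 : P 2 2 = P 0 0 * P 1 1 - P 0 1 * P 1 0 := by
    have := congrFun (congrFun (adjugate_fin_three P ▸ hadj : _ = Pᵀ) 2) 2
    simpa using this.symm
  -- explicit forms of Φ and eP
  have hΦ' : Φ = (f1*(1 - P 0 0) + f2*(1 - P 1 1) + f3*(1 - P 2 2))/2 := by
    rw [hΦ, hF]
    simp [Matrix.trace_fin_three, Matrix.mul_apply, Fin.sum_univ_three,
      Matrix.diagonal_apply, Matrix.sub_apply, Matrix.one_apply]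
    ring
  have he0 : eP 0 = (f3 * P 2 1 - f2 * P 1 2)/2 := by
    rw [heP, hF]
    simp [vee, Matrix.mul_apply, Fin.sum_univ_three, Matrix.diagonal_apply,
      Matrix.sub_apply, Matrix.transpose_apply]
    ring
  have he1 : eP 1 = (f1 * P 0 2 - f3 * P 2 0)/2 := by
    rw [heP, hF]
    simp [vee, Matrix.mul_apply, Fin.sum_univ_three, Matrix.diagonal_apply,
      Matrix.sub_apply, Matrix.transpose_apply]
    ring
  have he2 : eP 2 = (f2 * P 1 0 - f1 * P 0 1)/2 := by
    rw [heP, hF]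
    simp [vee, Matrix.mul_apply, Fin.sum_univ_three, Matrix.diagonal_apply,
      Matrix.sub_apply, Matrix.transpose_apply]
    ring
  have hdp : eP ⬝ᵥ eP = eP 0^2 + eP 1^2 + eP 2^2 := by
    simp [dotProduct, Fin.sum_univ_three]; ring
  have hnn : 0 ≤ eP ⬝ᵥ eP := by rw [hdp]; positivity
  have hEP : (_root_.enorm eP)^2 = ((f3*P 2 1 - f2*P 1 2)^2 + (f1*P 0 2 - f3*P 2 0)^2
      + (f2*P 1 0 - f1*P 0 1)^2)/4 := by
    rw [_root_.enorm, Real.sq_sqrt hnn, hdp, he0, he1, he2]; ring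
  -- bounds on h1, h2, h3
  have hG0 : h1 ≤ f2+f3 := by
    rw [hh1]; exact le_trans (min_le_right _ _) (min_le_left _ _)
  have hG1 : h1 ≤ f3+f1 := by
    rw [hh1]; exact le_trans (min_le_right _ _) (min_le_right _ _)
  have hG2 : h1 ≤ f1+f2 := by rw [hh1]; exact min_le_left _ _
  have h1n : 0 ≤ h1 := by
    rw [hh1]
    exact le_min (by linarith) (le_min (by linarith) (by linarith))
  have hD0 : (f3-f2)^2 ≤ h2 := by
    rw [hh2]
    have : (f3-f2)^2 = (f2-f3)^2 := by ring
    rw [this]; exact le_trans (le_max_left _ _) (le_max_right _ _)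
  have hD1 : (f1-f3)^2 ≤ h2 := by
    rw [hh2]
    have : (f1-f3)^2 = (f3-f1)^2 := by ring
    rw [this]; exact le_trans (le_max_right _ _) (le_max_right _ _)
  have hD2 : (f2-f1)^2 ≤ h2 := by
    rw [hh2]
    have : (f2-f1)^2 = (f1-f2)^2 := by ring
    rw [this]; exact le_max_left _ _
  have hH0 : (f2+f3)^2 ≤ h3 := by
    rw [hh3]; exact le_trans (le_max_left _ _) (le_max_right _ _)
  have hH1 : (f3+f1)^2 ≤ h3 := by
    rw [hh3]; exact le_trans (le_max_right _ _) (le_max_right _ _)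
  have hH2 : (f1+f2)^2 ≤ h3 := by rw [hh3]; exact le_max_left _ _
  have h2n : 0 ≤ h2 := le_trans (sq_nonneg _) hD0
  have h3n : 0 ≤ h3 := le_trans (sq_nonneg _) hH0
  -- degenerate case
  by_cases hz : h2 + h3 = 0
  · have h30 : h3 = 0 := by linarith
    have hz12 : f1 + f2 = 0 := by
      have h6 : (f1+f2)^2 = 0 := le_antisymm (by linarith) (sq_nonneg _)
      exact pow_eq_zero_iff (by norm_num : (2:ℕ) ≠ 0) |>.mp h6
    have hz23 : f2 + f3 = 0 := by
      have h6 : (f2+f3)^2 = 0 := le_antisymm (by linarith) (sq_nonneg _)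
      exact pow_eq_zero_iff (by norm_num : (2:ℕ) ≠ 0) |>.mp h6
    have hf1z : f1 = 0 := by linarith
    have hf2z : f2 = 0 := by linarith
    have hf3z : f3 = 0 := by linarith
    have h1z : h1 = 0 := by rw [hh1, hf1z, hf2z, hf3z]; norm_num
    have hΦz : Φ = 0 := by rw [hΦ', hf1z, hf2z, hf3z]; ring
    rw [h1z, hΦz]
    simp
  · have hpos : 0 < h2 + h3 := lt_of_le_of_ne (by linarith) (Ne.symm hz)
    rw [div_mul_eq_mul_div, div_le_iff₀ hpos, hEP, hΦ']
    -- the three KA bounds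
    have kA0 : (P 2 1 - P 1 2)^2 ≤ 4*(1 - P 1 1 - P 2 2 + P 0 0) :=
      KA (P 0 0) (P 1 0) (P 1 1) (P 1 2) (P 2 0) (P 2 1) (P 2 2) row1 row2 o12 a00
    have kA1 : (P 0 2 - P 2 0)^2 ≤ 4*(1 - P 2 2 - P 0 0 + P 1 1) := by
      have := KA (P 1 1) (P 0 1) (P 0 0) (P 0 2) (P 2 1) (P 2 0) (P 2 2)
        (by linear_combination row0) (by linear_combination row2)
        (by linear_combination o02) a11
      linarith only [this]
    have kA2 : (P 1 0 - P 0 1)^2 ≤ 4*(1 - P 0 0 - P 1 1 + P 2 2) :=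
      KA (P 2 2) (P 0 2) (P 0 0) (P 0 1) (P 1 2) (P 1 0) (P 1 1)
        (by linear_combination row0) (by linear_combination row1)
        (by linear_combination o01) a22
    -- the three KB bounds
    have kB0 : (P 2 1 + P 1 2)^2 ≤ 4*(1 - P 0 0) :=
      KB (P 0 0) (P 1 0) (P 1 1) (P 1 2) (P 2 0) (P 2 1) (P 2 2) row1 row2 a00
    have kB1 : (P 0 2 + P 2 0)^2 ≤ 4*(1 - P 1 1) := by
      have := KB (P 1 1) (P 0 1) (P 0 0) (P 0 2) (P 2 1) (P 2 0) (P 2 2)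
        (by linear_combination row0) (by linear_combination row2) a11
      linarith only [this]
    have kB2 : (P 1 0 + P 0 1)^2 ≤ 4*(1 - P 2 2) :=
      KB (P 2 2) (P 0 2) (P 0 0) (P 0 1) (P 1 2) (P 1 0) (P 1 1)
        (by linear_combination row0) (by linear_combination row1) a22
    -- cross-term equalities
    have tAB1 : (P 0 2)^2 - (P 2 0)^2 = (P 2 1)^2 - (P 1 2)^2 := by
      linear_combination col2 - row2
    have tAB2 : (P 1 0)^2 - (P 0 1)^2 = (P 2 1)^2 - (P 1 2)^2 := by
      linear_combination row1 - col1
    -- expansion of the squared error norm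
    have hW : 4*((f3*P 2 1 - f2*P 1 2)^2 + (f1*P 0 2 - f3*P 2 0)^2
          + (f2*P 1 0 - f1*P 0 1)^2)
        = (f2+f3)^2*((P 2 1 - P 1 2)^2) + (f3+f1)^2*((P 0 2 - P 2 0)^2)
          + (f1+f2)^2*((P 1 0 - P 0 1)^2)
          + (f3-f2)^2*((P 2 1 + P 1 2)^2) + (f1-f3)^2*((P 0 2 + P 2 0)^2)
          + (f2-f1)^2*((P 1 0 + P 0 1)^2) := by
      linear_combination (2*(f3+f1)*(f1-f3))*tAB1 + (2*(f1+f2)*(f2-f1))*tAB2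
    have key := key_sum f1 f2 f3
      ((1 - P 1 1 - P 2 2 + P 0 0)/2) ((1 - P 2 2 - P 0 0 + P 1 1)/2)
      ((1 - P 0 0 - P 1 1 + P 2 2)/2)
      ((P 2 1 - P 1 2)^2) ((P 0 2 - P 2 0)^2) ((P 1 0 - P 0 1)^2)
      ((P 2 1 + P 1 2)^2) ((P 0 2 + P 2 0)^2) ((P 1 0 + P 0 1)^2)
      h1 h2 h3
      (by linarith only [kA0, sq_nonneg (P 2 1 - P 1 2)])
      (by linarith only [kA1, sq_nonneg (P 0 2 - P 2 0)])
      (by linarith only [kA2, sq_nonneg (P 1 0 - P 0 1)])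
      (sq_nonneg _) (sq_nonneg _) (sq_nonneg _)
      (by linarith only [kA0]) (by linarith only [kA1]) (by linarith only [kA2])
      (sq_nonneg _) (sq_nonneg _) (sq_nonneg _)
      (by linarith only [kB0]) (by linarith only [kB1]) (by linarith only [kB2])
      h1n hG0 hG1 hG2 h2n hD0 hD1 hD2 hH0 hH1 hH2 hf1 hf2 hf3
    calc h1 * (((f3*P 2 1 - f2*P 1 2)^2 + (f1*P 0 2 - f3*P 2 0)^2
            + (f2*P 1 0 - f1*P 0 1)^2)/4)
        = h1 * ((f2+f3)^2*((P 2 1 - P 1 2)^2) + (f3+f1)^2*((P 0 2 - P 2 0)^2)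
            + (f1+f2)^2*((P 1 0 - P 0 1)^2)
            + (f3-f2)^2*((P 2 1 + P 1 2)^2) + (f1-f3)^2*((P 0 2 + P 2 0)^2)
            + (f2-f1)^2*((P 1 0 + P 0 1)^2)) / 16 := by
          linear_combination (h1/16) * hW
      _ ≤ 8*(h2+h3) * ((f2+f3)*((1 - P 1 1 - P 2 2 + P 0 0)/2)
            + (f3+f1)*((1 - P 2 2 - P 0 0 + P 1 1)/2)
            + (f1+f2)*((1 - P 0 0 - P 1 1 + P 2 2)/2)) / 16 := by linarith only [key]
      _ = (f1*(1 - P 0 0) + f2*(1 - P 1 1) + f3*(1 - P 2 2))/2 * (h2+h3) := by ring
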